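/- Suppose that for a Lipschitz path γ in a metric space M, and for every Lipschitz path β homotopic rel endpoints to γ, there exists a Lipschitz path β' homotopic rel endpoints to γ with Lip(β') ≤ Lip(γ), image(β') ⊆ image(γ), and length(β') ≤ length(β), via a homotopy H' with Lip(H') = Lip(γ) and image(H') ⊆ image(γ). Then the homotopy class [γ] contains a length minimizing representative γ̄, i.e. length(γ̄) = inf { length(β) : β ∈ [γ] }. -/

import Mathlib

open Set

/-- Length of a path on `[0,1]`. -/
noncomputable def pathLen {M : Type*} [PseudoEMetricSpace M] (η : ℝ → M) : ENNReal :=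
  eVariationOn η (Set.Icc 0 1)

/-- The unit square. -/
def Sq : Set (ℝ × ℝ) := Icc 0 1 ×ˢ Icc 0 1

/-- `H` is `L`-Lipschitz on the unit square with respect to the `L¹` metric. -/
def LipOnSq {M : Type*} [PseudoMetricSpace M] (L : ℝ) (H : ℝ × ℝ → M) : Prop :=
  ∀ p ∈ Sq, ∀ q ∈ Sq, dist (H p) (H q) ≤ L * (|p.1 - q.1| + |p.2 - q.2|)

/-- `γ` is `K`-Lipschitz on `[0,1]`. -/
def LipOn {M : Type*} [PseudoMetricSpace M] (K : ℝ) (γ : ℝ → M) : Prop :=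
  ∀ t ∈ Icc (0:ℝ) 1, ∀ t' ∈ Icc (0:ℝ) 1, dist (γ t) (γ t') ≤ K * |t - t'|

/-- The (optimal) Lipschitz constant of a path on `[0,1]`. -/
noncomputable def lipC {M : Type*} [PseudoMetricSpace M] (γ : ℝ → M) : ℝ :=
  sInf {K : ℝ | 0 ≤ K ∧ LipOn K γ}

/-- The (optimal) Lipschitz constant of a map on the unit square with the `L¹` metric. -/
noncomputable def lipCSq {M : Type*} [PseudoMetricSpace M] (H : ℝ × ℝ → M) : ℝ :=
  sInf {L : ℝ | 0 ≤ L ∧ LipOnSq L H}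

/-- `β` is Lipschitz homotopic rel endpoints to `γ`. -/
def HtpyRel {M : Type*} [PseudoMetricSpace M] (γ β : ℝ → M) : Prop :=
  ∃ H : ℝ × ℝ → M, (∃ L : ℝ, 0 ≤ L ∧ LipOnSq L H) ∧
    (∀ t ∈ Icc (0:ℝ) 1, H (t, 0) = γ t) ∧
    (∀ t ∈ Icc (0:ℝ) 1, H (t, 1) = β t) ∧
    (∀ s ∈ Icc (0:ℝ) 1, H (0, s) = γ 0) ∧
    (∀ s ∈ Icc (0:ℝ) 1, H (1, s) = γ 1)

/-- Suppose that for a Lipschitz path `γ` and every Lipschitz path `β` homotopic rel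
endpoints to `γ` there are a path `β'` and a homotopy `H'` rel endpoints from `γ` to `β'`
with `Lip(H') = Lip(γ)`, `image(H') ⊆ image(γ)`, `Lip(β') ≤ Lip(γ)`,
`image(β') ⊆ image(γ)`, and `length(β') ≤ length(β)`. Then `[γ]` contains a length
minimizing representative. -/
theorem stmt15 {M : Type*} [MetricSpace M] (γ : ℝ → M)
    (hγ : ∃ K : ℝ, 0 ≤ K ∧ LipOn K γ)
    (hdes : ∀ β : ℝ → M, HtpyRel γ β →
      ∃ (β' : ℝ → M) (H' : ℝ × ℝ → M),
        LipOnSq (lipC γ) H' ∧ lipCSq H' = lipC γ ∧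
        (∀ t ∈ Icc (0:ℝ) 1, H' (t, 0) = γ t) ∧
        (∀ t ∈ Icc (0:ℝ) 1, H' (t, 1) = β' t) ∧
        (∀ s ∈ Icc (0:ℝ) 1, H' (0, s) = γ 0) ∧
        (∀ s ∈ Icc (0:ℝ) 1, H' (1, s) = γ 1) ∧
        H' '' Sq ⊆ γ '' Icc 0 1 ∧
        LipOn (lipC γ) β' ∧ lipC β' ≤ lipC γ ∧
        β' '' Icc 0 1 ⊆ γ '' Icc 0 1 ∧
        pathLen β' ≤ pathLen β) :
    ∃ γbar : ℝ → M, HtpyRel γ γbar ∧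
      pathLen γbar = ⨅ (β : ℝ → M) (_ : HtpyRel γ β), pathLen β := by
  classical
  obtain ⟨K, hK0, hKlip⟩ := hγ
  have : Nonempty M := ⟨γ 0⟩
  -- γ is homotopic to itself via the constant homotopy
  have hself : HtpyRel γ γ := by
    refine ⟨fun p => γ p.1, ⟨K, hK0, ?_⟩, fun t ht => rfl, fun t ht => rfl,
      fun s hs => rfl, fun s hs => rfl⟩
    intro p hp q hq
    have h1 := hKlip p.1 hp.1 q.1 hq.1
    have h2 : (0:ℝ) ≤ |p.2 - q.2| := abs_nonneg _
    nlinarith [abs_nonneg (p.1 - q.1)]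
  set I := ⨅ (β : ℝ → M) (_ : HtpyRel γ β), pathLen β with hI
  have hIle : ∀ β, HtpyRel γ β → I ≤ pathLen β := fun β h => iInf₂_le β h
  by_cases htop : I = ⊤
  · exact ⟨γ, hself, le_antisymm (htop ▸ le_top) (hIle γ hself)⟩
  -- minimizing sequence
  have hseq : ∀ n : ℕ, ∃ β, HtpyRel γ β ∧ pathLen β ≤ I + ((n : ENNReal) + 1)⁻¹ := by
    intro n
    have hlt : I < I + ((n : ENNReal) + 1)⁻¹ :=
      ENNReal.lt_add_right htop (by simp)
    rw [hI] at hlt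
    obtain ⟨β, hβ⟩ := iInf_lt_iff.mp hlt
    obtain ⟨hβh, hβl⟩ := iInf_lt_iff.mp hβ
    exact ⟨β, hβh, hβl.le⟩
  choose β hβ hβlen using hseq
  choose β' H' h1 h2 h3 h4 h5 h6 h7 h8 h9 h10 h11 using fun n => hdes (β n) (hβ n)
  -- the image of γ is compact
  have hγlip : LipschitzOnWith ⟨K, hK0⟩ γ (Icc 0 1) :=
    LipschitzOnWith.of_dist_le_mul (fun x hx y hy => by
      rw [Real.dist_eq]; exact hKlip x hx y hy)
  have hCcomp : IsCompact (γ '' Icc 0 1) :=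
    isCompact_Icc.image_of_continuousOn hγlip.continuousOn
  -- an ultrafilter extending atTop
  let U : Ultrafilter ℕ := Ultrafilter.of Filter.atTop
  have hUle : (U : Filter ℕ) ≤ Filter.atTop := Ultrafilter.of_le _
  have hHlim : ∀ p, p ∈ Sq → ∃ x, x ∈ γ '' Icc 0 1 ∧
      Filter.Tendsto (fun n => H' n p) U (nhds x) := by
    intro p hp
    have hmem : ∀ n, H' n p ∈ γ '' Icc 0 1 := fun n => h7 n ⟨p, hp, rfl⟩
    obtain ⟨x, hx, hle⟩ := hCcomp.ultrafilter_le_nhds (U.map (fun n => H' n p))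
      (by
        rw [Ultrafilter.coe_map, Filter.le_principal_iff, Filter.mem_map]
        exact Filter.univ_mem' hmem)
    exact ⟨x, hx, by rwa [Ultrafilter.coe_map] at hle⟩
  choose! Hf hHfC hHf using hHlim
  -- boundary memberships in the square
  have h01 : (0:ℝ) ∈ Icc (0:ℝ) 1 := ⟨le_refl 0, zero_le_one⟩
  have h11' : (1:ℝ) ∈ Icc (0:ℝ) 1 := ⟨zero_le_one, le_refl 1⟩
  have hSq0 : ∀ t, t ∈ Icc (0:ℝ) 1 → ((t, (0:ℝ)) ∈ Sq) := fun t ht => ⟨ht, h01⟩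
  have hSq1 : ∀ t, t ∈ Icc (0:ℝ) 1 → ((t, (1:ℝ)) ∈ Sq) := fun t ht => ⟨ht, h11'⟩
  have hSqL : ∀ s, s ∈ Icc (0:ℝ) 1 → (((0:ℝ), s) ∈ Sq) := fun s hs => ⟨h01, hs⟩
  have hSqR : ∀ s, s ∈ Icc (0:ℝ) 1 → (((1:ℝ), s) ∈ Sq) := fun s hs => ⟨h11', hs⟩
  set γbar : ℝ → M := fun t => Hf (t, 1) with hγbar
  have hlipC0 : (0:ℝ) ≤ lipC γ := Real.sInf_nonneg (fun x hx => hx.1)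
  -- Hf is Lipschitz on the square
  have hHfLip : LipOnSq (lipC γ) Hf := by
    intro p hp q hq
    exact le_of_tendsto ((hHf p hp).dist (hHf q hq))
      (Filter.Eventually.of_forall fun n => h1 n p hp q hq)
  -- boundary conditions pass to the limit
  have hb0 : ∀ t, t ∈ Icc (0:ℝ) 1 → Hf (t, 0) = γ t := by
    intro t ht
    refine tendsto_nhds_unique (hHf (t, 0) (hSq0 t ht)) ?_
    have : (fun n => H' n (t, 0)) = fun n => γ t := funext fun n => h3 n t ht
    rw [this]; exact tendsto_const_nhds
  have hb1 : ∀ t, t ∈ Icc (0:ℝ) 1 →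
      Filter.Tendsto (fun n => β' n t) U (nhds (γbar t)) := by
    intro t ht
    have := hHf (t, 1) (hSq1 t ht)
    have he : (fun n => H' n (t, 1)) = fun n => β' n t := funext fun n => h4 n t ht
    rwa [he] at this
  have hbL : ∀ s, s ∈ Icc (0:ℝ) 1 → Hf (0, s) = γ 0 := by
    intro s hs
    refine tendsto_nhds_unique (hHf (0, s) (hSqL s hs)) ?_
    have : (fun n => H' n (0, s)) = fun n => γ 0 := funext fun n => h5 n s hs
    rw [this]; exact tendsto_const_nhds
  have hbR : ∀ s, s ∈ Icc (0:ℝ) 1 → Hf (1, s) = γ 1 := by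
    intro s hs
    refine tendsto_nhds_unique (hHf (1, s) (hSqR s hs)) ?_
    have : (fun n => H' n (1, s)) = fun n => γ 1 := funext fun n => h6 n s hs
    rw [this]; exact tendsto_const_nhds
  have hhtpy : HtpyRel γ γbar :=
    ⟨Hf, ⟨lipC γ, hlipC0, hHfLip⟩, hb0, fun t ht => rfl, hbL, hbR⟩
  refine ⟨γbar, hhtpy, le_antisymm ?_ (hIle γbar hhtpy)⟩
  -- length estimate
  refine ENNReal.le_of_forall_pos_le_add fun ε hε hItop => ?_
  obtain ⟨N, hN⟩ := ENNReal.exists_inv_nat_lt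
    (show (ε : ENNReal) ≠ 0 by exact_mod_cast hε.ne')
  have hev : ∀ᶠ k in (U : Filter ℕ), pathLen (β' k) ≤ I + ε := by
    refine hUle ?_
    filter_upwards [Filter.eventually_ge_atTop N] with k hk
    have hk1 : ((k : ENNReal) + 1)⁻¹ ≤ (N : ENNReal)⁻¹ :=
      ENNReal.inv_le_inv' (by exact_mod_cast Nat.le_succ_of_le hk)
    calc pathLen (β' k) ≤ pathLen (β k) := h11 k
      _ ≤ I + ((k : ENNReal) + 1)⁻¹ := hβlen k
      _ ≤ I + ε := add_le_add_right (hk1.trans hN.le) I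
  rw [pathLen, eVariationOn]
  refine iSup_le ?_
  rintro ⟨n, u, hu, hus⟩
  have htend : Filter.Tendsto
      (fun k => ∑ i ∈ Finset.range n, edist (β' k (u (i + 1))) (β' k (u i)))
      U (nhds (∑ i ∈ Finset.range n, edist (γbar (u (i + 1))) (γbar (u i)))) := by
    refine tendsto_finset_sum _ fun i _ => ?_
    exact (hb1 (u (i + 1)) (hus (i + 1))).edist (hb1 (u i) (hus i))
  refine le_of_tendsto htend ?_
  filter_upwards [hev] with k hk
  exact (eVariationOn.sum_le (f := β' k) (n := n) hu hus).trans hk
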